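/- Let W_1, ..., W_t be subsets of a finite set W, and let λ ≥ 1 be a real parameter such that the sum over all ordered pairs i ≠ j of |W_i ∩ W_j| is at most λ times the sum over i of |W_i|. Then the cardinality of the union of the W_i is at least (1/(4λ)) times the sum of the |W_i|. -/

import Mathlib

private lemma card_eq_sum_ind {α : Type*} [DecidableEq α] (U s : Finset α) (hs : s ⊆ U) :
    (s.card : ℝ) = ∑ x ∈ U, (if x ∈ s then (1:ℝ) else 0) := by
  rw [Finset.sum_boole, Finset.filter_mem_eq_inter, Finset.inter_eq_right.mpr hs]

/-- Strong Inclusion-Exclusion (Kumar–Saraf): if the sum over ordered pairs `i ≠ j` of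
`|W_i ∩ W_j|` is at most `λ` times `∑ |W_i|` (with `λ ≥ 1`), then
`|⋃ W_i| ≥ (1/(4λ)) ∑ |W_i|`. -/
theorem strong_inclusion_exclusion {α : Type*} [DecidableEq α]
    (W : Finset α) (t : ℕ) (ht : 0 < t) (Ws : Fin t → Finset α)
    (hsub : ∀ i, Ws i ⊆ W) (lam : ℝ) (hlam : 1 ≤ lam)
    (h : (∑ i : Fin t, ∑ j ∈ Finset.univ.erase i, ((Ws i ∩ Ws j).card : ℝ))
          ≤ lam * ∑ i : Fin t, ((Ws i).card : ℝ)) :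
    (1 / (4 * lam)) * ∑ i : Fin t, ((Ws i).card : ℝ)
      ≤ ((Finset.univ.biUnion Ws).card : ℝ) := by
  classical
  set U := Finset.univ.biUnion Ws with hU
  set f : Fin t → α → ℝ := fun i x => if x ∈ Ws i then (1:ℝ) else 0 with hf
  set d : α → ℝ := fun x => ∑ i : Fin t, f i x with hdd
  have hsubU : ∀ i, Ws i ⊆ U := fun i x hx =>
    Finset.mem_biUnion.mpr ⟨i, Finset.mem_univ _, hx⟩
  -- ∑ |W_i| = ∑_{x∈U} d x
  have hA : (∑ i : Fin t, ((Ws i).card : ℝ)) = ∑ x ∈ U, d x := by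
    rw [Finset.sum_comm]
    exact Finset.sum_congr rfl fun i _ => card_eq_sum_ind U (Ws i) (hsubU i)
  -- pair sum = ∑_{x∈U} (d x ^ 2 - d x)
  have hB : (∑ i : Fin t, ∑ j ∈ Finset.univ.erase i, ((Ws i ∩ Ws j).card : ℝ))
      = ∑ x ∈ U, (d x ^ 2 - d x) := by
    have step : ∀ i j : Fin t, ((Ws i ∩ Ws j).card : ℝ) = ∑ x ∈ U, f i x * f j x := by
      intro i j
      rw [card_eq_sum_ind U _ ((Finset.inter_subset_left).trans (hsubU i))]
      refine Finset.sum_congr rfl fun x _ => ?_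
      by_cases h1 : x ∈ Ws i <;> by_cases h2 : x ∈ Ws j <;>
        simp [hf, h1, h2, Finset.mem_inter]
    simp_rw [step]
    rw [show (∑ i : Fin t, ∑ j ∈ Finset.univ.erase i, ∑ x ∈ U, f i x * f j x)
        = ∑ i : Fin t, ∑ x ∈ U, ∑ j ∈ Finset.univ.erase i, f i x * f j x from
      Finset.sum_congr rfl fun i _ => Finset.sum_comm, Finset.sum_comm]
    refine Finset.sum_congr rfl fun x _ => ?_
    have hsq : ∀ i : Fin t, f i x * f i x = f i x := by
      intro i; by_cases hx : x ∈ Ws i <;> simp [hf, hx]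
    have step2 : ∀ i : Fin t, ∑ j ∈ Finset.univ.erase i, f i x * f j x
        = f i x * d x - f i x := by
      intro i
      rw [← Finset.mul_sum, Finset.sum_erase_eq_sub (Finset.mem_univ i),
        mul_sub, hsq i, hdd]
    simp_rw [step2]
    rw [Finset.sum_sub_distrib, ← Finset.sum_mul]
    rw [hdd]
    ring
  -- Cauchy–Schwarz
  set S := ∑ x ∈ U, d x with hS
  have hd0 : ∀ x ∈ U, 0 ≤ d x := by
    intro x _
    refine Finset.sum_nonneg fun i _ => ?_
    by_cases hx : x ∈ Ws i <;> simp [hf, hx]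
  have hS0 : 0 ≤ S := Finset.sum_nonneg hd0
  have hsum_sq : ∑ x ∈ U, d x ^ 2 ≤ (lam + 1) * S := by
    rw [hA, hB] at h
    have := Finset.sum_sub_distrib (s := U) (f := fun x => d x ^ 2) (g := d)
    nlinarith [h, this]
  have hcs : S ^ 2 ≤ (U.card : ℝ) * ∑ x ∈ U, d x ^ 2 := by
    have := sq_sum_le_card_mul_sum_sq (s := U) (f := d)
    exact_mod_cast this
  have hc0 : (0:ℝ) ≤ (U.card : ℝ) := by positivity
  rw [hA]
  rcases eq_or_lt_of_le hS0 with hSz | hSpos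
  · rw [← hSz]; simpa using hc0
  · have hkey : S ^ 2 ≤ (U.card : ℝ) * ((lam + 1) * S) := by
      calc S ^ 2 ≤ (U.card : ℝ) * ∑ x ∈ U, d x ^ 2 := hcs
        _ ≤ (U.card : ℝ) * ((lam + 1) * S) := by
            exact mul_le_mul_of_nonneg_left hsum_sq hc0
    have hS_le : S ≤ (U.card : ℝ) * (lam + 1) := by
      nlinarith
    have hlampos : 0 < 4 * lam := by linarith
    rw [div_mul_eq_mul_div, one_mul, div_le_iff₀ hlampos]
    nlinarith
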